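/- For each integer k ≥ 1 there is a constant A_k depending only on k with the following property: if I ⊂ ℝ is an interval, η > 0, and g : I → ℝ is k times differentiable with |g^{(k)}(t)| > η for all t ∈ I, then for every ε > 0 the Lebesgue measure of {t ∈ I : |g(t)| < ε} is at most A_k ε^{1/k} η^{−1/k}. -/

import Mathlib

open MeasureTheory Set

/-- Base case: if `f0` has derivative `f1` on an interval `I` with `|f1| > η`, then
the sublevel set `{|f0| < ε}` has measure at most `4 ε / η`. -/
private lemma vdc_base (I : Set ℝ) (hI : I.OrdConnected) (f0 f1 : ℝ → ℝ) (η : ℝ) (hη : 0 < η)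
    (hd : ∀ t ∈ I, HasDerivWithinAt f0 (f1 t) I t)
    (hb : ∀ t ∈ I, η < |f1 t|) (ε : ℝ) (hε : 0 < ε) :
    volume {t ∈ I | |f0 t| < ε} ≤ ENNReal.ofReal (4 * (ε / η)) := by
  set S := {t ∈ I | |f0 t| < ε} with hSdef
  have key : ∀ s ∈ S, ∀ t ∈ S, s < t → t - s ≤ 2 * (ε / η) := by
    intro s hs t ht hst
    have hsub : Icc s t ⊆ I := hI.out hs.1 ht.1
    have hcont : ContinuousOn f0 (Icc s t) := fun x hx =>
      ((hd x (hsub hx)).continuousWithinAt).mono hsub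
    have hderiv : ∀ x ∈ Ioo s t, HasDerivAt f0 (f1 x) x := by
      intro x hx
      have hxI : x ∈ I := hsub (Ioo_subset_Icc_self hx)
      exact (hd x hxI).hasDerivAt
        (mem_nhds_iff.2 ⟨Ioo s t, fun y hy => hsub (Ioo_subset_Icc_self hy), isOpen_Ioo, hx⟩)
    obtain ⟨c, hc, hceq⟩ := exists_hasDerivAt_eq_slope f0 f1 hst hcont hderiv
    have hcI : c ∈ I := hsub (Ioo_subset_Icc_self hc)
    have h1 : η < |f0 t - f0 s| / (t - s) := by
      have h := hb c hcI
      rw [hceq, abs_div, abs_of_pos (sub_pos.2 hst)] at h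
      exact h
    have h1' : η * (t - s) < |f0 t - f0 s| := (lt_div_iff₀ (sub_pos.2 hst)).1 h1
    have h2 : |f0 t - f0 s| < 2 * ε := by
      calc |f0 t - f0 s| ≤ |f0 t| + |f0 s| := abs_sub _ _
        _ < ε + ε := add_lt_add ht.2 hs.2
        _ = 2 * ε := by ring
    have h3 : η * (t - s) < 2 * ε := lt_trans h1' h2
    have heq : ε / η * η = ε := div_mul_cancel₀ _ hη.ne'
    nlinarith [h3, heq, hη]
  rcases eq_empty_or_nonempty S with hS | ⟨s₀, hs₀⟩
  · rw [hS]; simp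
  · have hc0 : 0 ≤ 2 * (ε / η) := by positivity
    have hsub : S ⊆ Icc (s₀ - 2 * (ε / η)) (s₀ + 2 * (ε / η)) := by
      intro t ht
      constructor
      · rcases lt_or_ge t s₀ with h | h
        · have := key t ht s₀ hs₀ h
          linarith
        · linarith
      · rcases lt_or_ge s₀ t with h | h
        · have := key s₀ hs₀ t ht h
          linarith
        · linarith
    calc volume S ≤ volume (Icc (s₀ - 2 * (ε / η)) (s₀ + 2 * (ε / η))) := measure_mono hsub
      _ = ENNReal.ofReal (4 * (ε / η)) := by rw [Real.volume_Icc]; congr 1; ring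

private lemma vdc_aux : ∀ k : ℕ, 1 ≤ k →
    ∃ A : ℝ, 0 ≤ A ∧ ∀ (I : Set ℝ), I.OrdConnected →
      ∀ (f : ℕ → ℝ → ℝ) (η : ℝ), 0 < η →
      (∀ j, j < k → ∀ t ∈ I, HasDerivWithinAt (f j) (f (j + 1) t) I t) →
      (∀ t ∈ I, η < |f k t|) →
      ∀ ε : ℝ, 0 < ε →
        volume {t ∈ I | |f 0 t| < ε} ≤
          ENNReal.ofReal (A * ε ^ (1 / (k : ℝ)) * η ^ (-(1 / (k : ℝ)))) := by
  intro k hk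
  induction k, hk using Nat.le_induction with
  | base =>
    refine ⟨4, by norm_num, ?_⟩
    intro I hI f η hη hchain hbound ε hε
    have h := vdc_base I hI (f 0) (f 1) η hη (hchain 0 one_pos) hbound ε hε
    refine h.trans (ENNReal.ofReal_le_ofReal (le_of_eq ?_))
    rw [Nat.cast_one]
    norm_num
    rw [Real.rpow_neg_one]
    ring
  | succ k hk IH =>
    obtain ⟨Ak, hAk, IHk⟩ := IH
    refine ⟨4 + 4 * Ak, by positivity, ?_⟩
    intro I hI f η hη hchain hbound ε hε
    have hconv : Convex ℝ I := convex_iff_ordConnected.2 hI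
    have hkpos : (0 : ℝ) < (k : ℝ) := by exact_mod_cast hk
    have hk1pos : (0 : ℝ) < (k : ℝ) + 1 := by linarith
    set c : ℝ := 1 / ((k : ℝ) + 1) with hcdef
    have hcpos : 0 < c := by positivity
    set x : ℝ := ε ^ c * η ^ (-c) with hxdef
    have hxpos : 0 < x := by positivity
    set δ : ℝ := η * x with hδdef
    have hδpos : 0 < δ := by positivity
    -- the chain at top level
    have hchainI : ∀ t ∈ I, HasDerivWithinAt (f k) (f (k + 1) t) I t :=
      hchain k (Nat.lt_succ_self k)
    have hne : ∀ t ∈ I, f (k + 1) t ≠ 0 := by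
      intro t ht h0
      have h := hbound t ht
      rw [h0, abs_zero] at h
      linarith
    -- Darboux: constant sign, hence monotone or antitone
    have hcontk : ContinuousOn (f k) I := fun t ht => (hchainI t ht).continuousWithinAt
    have hderint : ∀ y ∈ interior I, HasDerivWithinAt (f k) (f (k + 1) y) (interior I) y :=
      fun y hy => (hchainI y (interior_subset hy)).mono interior_subset
    have hmm : MonotoneOn (f k) I ∨ AntitoneOn (f k) I := by
      rcases hasDerivWithinAt_forall_lt_or_forall_gt_of_forall_ne hconv hchainI hne with h | h
      · right
        exact (strictAntiOn_of_hasDerivWithinAt_neg hconv hcontk hderint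
          (fun y hy => h y (interior_subset hy))).antitoneOn
      · left
        exact (strictMonoOn_of_hasDerivWithinAt_pos hconv hcontk hderint
          (fun y hy => h y (interior_subset hy))).monotoneOn
    set L := {t ∈ I | f k t ≤ -δ} with hLdef
    set R := {t ∈ I | δ ≤ f k t} with hRdef
    set M := {t ∈ I | |f k t| < δ} with hMdef
    have hLI : L ⊆ I := fun t ht => ht.1
    have hRI : R ⊆ I := fun t ht => ht.1
    have hLord : L.OrdConnected := by
      constructor
      rintro a ⟨haI, ha⟩ b ⟨hbI, hb⟩ z hz
      have hzI : z ∈ I := hI.out haI hbI hz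
      refine ⟨hzI, ?_⟩
      rcases hmm with h | h
      · exact le_trans (h hzI hbI hz.2) hb
      · exact le_trans (h haI hzI hz.1) ha
    have hRord : R.OrdConnected := by
      constructor
      rintro a ⟨haI, ha⟩ b ⟨hbI, hb⟩ z hz
      have hzI : z ∈ I := hI.out haI hbI hz
      refine ⟨hzI, ?_⟩
      rcases hmm with h | h
      · exact le_trans ha (h haI hzI hz.1)
      · exact le_trans hb (h hzI hbI hz.2)
    have hdecomp : {t ∈ I | |f 0 t| < ε} ⊆
        M ∪ ({t ∈ L | |f 0 t| < ε} ∪ {t ∈ R | |f 0 t| < ε}) := by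
      rintro t ⟨htI, htε⟩
      by_cases hM : |f k t| < δ
      · exact Or.inl ⟨htI, hM⟩
      · push_neg at hM
        rcases le_abs.1 hM with h | h
        · exact Or.inr (Or.inr ⟨⟨htI, h⟩, htε⟩)
        · exact Or.inr (Or.inl ⟨⟨htI, by linarith⟩, htε⟩)
    -- measure of the middle part
    have volM : volume M ≤ ENNReal.ofReal (4 * (δ / η)) :=
      vdc_base I hI (f k) (f (k + 1)) η hη hchainI hbound δ hδpos
    -- measures of the two side parts, by induction hypothesis
    have hchainL : ∀ j, j < k → ∀ t ∈ L, HasDerivWithinAt (f j) (f (j + 1) t) L t :=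
      fun j hj t ht => (hchain j (hj.trans (Nat.lt_succ_self k)) t (hLI ht)).mono hLI
    have hchainR : ∀ j, j < k → ∀ t ∈ R, HasDerivWithinAt (f j) (f (j + 1) t) R t :=
      fun j hj t ht => (hchain j (hj.trans (Nat.lt_succ_self k)) t (hRI ht)).mono hRI
    have hboundL : ∀ t ∈ L, δ / 2 < |f k t| := by
      intro t ht
      have h1 : δ ≤ -(f k t) := by linarith [ht.2]
      have h2 : -(f k t) ≤ |f k t| := neg_le_abs _
      linarith
    have hboundR : ∀ t ∈ R, δ / 2 < |f k t| := by
      intro t ht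
      have h2 : f k t ≤ |f k t| := le_abs_self _
      linarith [ht.2]
    have hδ2pos : 0 < δ / 2 := by positivity
    have volL := IHk L hLord f (δ / 2) hδ2pos hchainL hboundL ε hε
    have volR := IHk R hRord f (δ / 2) hδ2pos hchainR hboundR ε hε
    set a2 : ℝ := Ak * ε ^ (1 / (k : ℝ)) * (δ / 2) ^ (-(1 / (k : ℝ))) with ha2def
    have ha2nn : 0 ≤ a2 := by
      apply mul_nonneg (mul_nonneg hAk (Real.rpow_nonneg hε.le _)) (Real.rpow_nonneg hδ2pos.le _)
    have ha1nn : (0 : ℝ) ≤ 4 * (δ / η) := by positivity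
    -- the real-number inequality
    have hck : c * ((k : ℝ) + 1) = 1 := by
      rw [hcdef]; field_simp
    have hxk1 : x ^ ((k : ℝ) + 1) = ε / η := by
      rw [hxdef, Real.mul_rpow (Real.rpow_nonneg hε.le _) (Real.rpow_nonneg hη.le _),
        ← Real.rpow_mul hε.le, ← Real.rpow_mul hη.le, hck,
        show -c * ((k : ℝ) + 1) = -1 by rw [neg_mul, hck],
        Real.rpow_one, Real.rpow_neg_one, div_eq_mul_inv]
    have hδxk : δ * x ^ ((k : ℝ)) = ε := by
      have h1 : x ^ ((k : ℝ) + 1) = x ^ ((k : ℝ)) * x := by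
        rw [Real.rpow_add hxpos, Real.rpow_one]
      have h2 : η * (x ^ ((k : ℝ)) * x) = ε := by
        rw [← h1, hxk1, mul_div_cancel₀ _ hη.ne']
      rw [hδdef]; linarith [h2]
    have hεδ : ε / δ = x ^ ((k : ℝ)) := by
      rw [div_eq_iff hδpos.ne', ← hδxk]; ring
    have hxunit : ε ^ (1 / (k : ℝ)) * δ ^ (-(1 / (k : ℝ))) = x := by
      have h1 : (ε / δ) ^ (1 / (k : ℝ)) = x := by
        rw [hεδ, ← Real.rpow_mul hxpos.le, mul_one_div, div_self hkpos.ne', Real.rpow_one]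
      rw [← h1, Real.div_rpow hε.le hδpos.le, Real.rpow_neg hδpos.le]
      exact (div_eq_mul_inv _ _).symm
    have h2k : (2 : ℝ) ^ (1 / (k : ℝ)) ≤ 2 := by
      have hle : 1 / (k : ℝ) ≤ 1 := by
        rw [div_le_one hkpos]
        exact_mod_cast hk
      have := Real.rpow_le_rpow_of_exponent_le one_le_two hle
      rwa [Real.rpow_one] at this
    have ha2le : a2 ≤ 2 * (Ak * x) := by
      have hsplit : (δ / 2) ^ (-(1 / (k : ℝ))) =
          δ ^ (-(1 / (k : ℝ))) * (2 : ℝ) ^ (1 / (k : ℝ)) := by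
        rw [Real.div_rpow hδpos.le (by norm_num : (0:ℝ) ≤ 2), Real.rpow_neg hδpos.le,
          Real.rpow_neg (by norm_num : (0:ℝ) ≤ 2), ← Real.rpow_neg hδpos.le]
        rw [div_eq_mul_inv, inv_inv]
      rw [ha2def, hsplit]
      have hbase : Ak * ε ^ (1 / (k : ℝ)) * δ ^ (-(1 / (k : ℝ))) = Ak * x := by
        rw [mul_assoc, hxunit]
      calc Ak * ε ^ (1 / (k : ℝ)) * (δ ^ (-(1 / (k : ℝ))) * (2:ℝ) ^ (1 / (k : ℝ)))
          = (Ak * ε ^ (1 / (k : ℝ)) * δ ^ (-(1 / (k : ℝ)))) * (2:ℝ) ^ (1 / (k : ℝ)) := by ring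
        _ = (Ak * x) * (2:ℝ) ^ (1 / (k : ℝ)) := by rw [hbase]
        _ ≤ (Ak * x) * 2 := by
            apply mul_le_mul_of_nonneg_left h2k (mul_nonneg hAk hxpos.le)
        _ = 2 * (Ak * x) := by ring
    have hkey : 4 * (δ / η) + (a2 + a2) ≤
        (4 + 4 * Ak) * ε ^ (1 / ((k : ℝ) + 1)) * η ^ (-(1 / ((k : ℝ) + 1))) := by
      have hδη : δ / η = x := by rw [hδdef, mul_div_cancel_left₀ _ hη.ne']
      have hrhs : (4 + 4 * Ak) * ε ^ (1 / ((k : ℝ) + 1)) * η ^ (-(1 / ((k : ℝ) + 1)))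
          = (4 + 4 * Ak) * x := by
        rw [hxdef, hcdef]; ring
      rw [hδη, hrhs]
      nlinarith [ha2le, hxpos]
    -- put everything together
    calc volume {t ∈ I | |f 0 t| < ε}
        ≤ volume (M ∪ ({t ∈ L | |f 0 t| < ε} ∪ {t ∈ R | |f 0 t| < ε})) := measure_mono hdecomp
      _ ≤ volume M + volume ({t ∈ L | |f 0 t| < ε} ∪ {t ∈ R | |f 0 t| < ε}) :=
          measure_union_le _ _
      _ ≤ volume M + (volume {t ∈ L | |f 0 t| < ε} + volume {t ∈ R | |f 0 t| < ε}) := by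
          exact add_le_add le_rfl (measure_union_le _ _)
      _ ≤ ENNReal.ofReal (4 * (δ / η)) + (ENNReal.ofReal a2 + ENNReal.ofReal a2) :=
          add_le_add volM (add_le_add volL volR)
      _ = ENNReal.ofReal (4 * (δ / η) + (a2 + a2)) := by
          rw [← ENNReal.ofReal_add ha2nn ha2nn, ← ENNReal.ofReal_add ha1nn (by linarith)]
      _ ≤ ENNReal.ofReal ((4 + 4 * Ak) * ε ^ (1 / ((k:ℕ) + 1 : ℝ)) *
            η ^ (-(1 / ((k:ℕ) + 1 : ℝ)))) := by
          apply ENNReal.ofReal_le_ofReal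
          convert hkey using 3 <;> push_cast <;> ring_nf
      _ = ENNReal.ofReal ((4 + 4 * Ak) * ε ^ (1 / (((k + 1 : ℕ)) : ℝ)) *
            η ^ (-(1 / (((k + 1 : ℕ)) : ℝ)))) := by push_cast; ring_nf

/-- **Classical Van der Corput Lemma (sublevel set form).**
For each integer `k ≥ 1` there is a constant `A_k` depending only on `k` such that:
if `I ⊂ ℝ` is an interval, `η > 0`, and `g : I → ℝ` is `k` times differentiable with
`|g^{(k)}(t)| > η` for all `t ∈ I`, then for every `ε > 0` the Lebesgue measure of
`{t ∈ I : |g(t)| < ε}` is at most `A_k ε^{1/k} η^{-1/k}`. -/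
theorem vanDerCorput_sublevel (k : ℕ) (hk : 1 ≤ k) :
    ∃ A : ℝ, ∀ (I : Set ℝ), I.OrdConnected →
      ∀ (g : ℝ → ℝ) (η : ℝ), 0 < η →
      (∀ j, j < k → DifferentiableOn ℝ (iteratedDerivWithin j g I) I) →
      (∀ t ∈ I, η < |iteratedDerivWithin k g I t|) →
      ∀ ε : ℝ, 0 < ε →
        volume {t ∈ I | |g t| < ε} ≤
          ENNReal.ofReal (A * ε ^ (1 / (k : ℝ)) * η ^ (-(1 / (k : ℝ)))) := by
  obtain ⟨A, hA0, hA⟩ := vdc_aux k hk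
  refine ⟨A, ?_⟩
  intro I hI g η hη hdiff hbound ε hε
  by_cases hsing : I.Subsingleton
  · have h0 : volume {t ∈ I | |g t| < ε} = 0 :=
      measure_mono_null (fun t ht => ht.1) (Set.Subsingleton.measure_zero hsing volume)
    rw [h0]
    exact zero_le
  · rw [Set.not_subsingleton_iff] at hsing
    obtain ⟨a, ha, b, hb, hab⟩ := hsing
    have hUD : UniqueDiffOn ℝ I := by
      apply uniqueDiffOn_convex (convex_iff_ordConnected.2 hI)
      rcases (Ne.lt_or_gt hab) with h | h
      · have hIoo : Ioo a b ⊆ I := fun z hz => hI.out ha hb ⟨hz.1.le, hz.2.le⟩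
        exact ⟨(a + b) / 2, interior_maximal hIoo isOpen_Ioo ⟨by linarith, by linarith⟩⟩
      · have hIoo : Ioo b a ⊆ I := fun z hz => hI.out hb ha ⟨hz.1.le, hz.2.le⟩
        exact ⟨(b + a) / 2, interior_maximal hIoo isOpen_Ioo ⟨by linarith, by linarith⟩⟩
    set f : ℕ → ℝ → ℝ := fun j => iteratedDerivWithin j g I with hfdef
    have hchain : ∀ j, j < k → ∀ t ∈ I, HasDerivWithinAt (f j) (f (j + 1) t) I t := by
      intro j hj t ht
      have hdt := (hdiff j hj) t ht
      have hstep : f (j + 1) t = derivWithin (f j) I t :=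
        congrFun iteratedDerivWithin_succ t
      rw [hstep]
      exact hdt.hasDerivWithinAt
    have h := hA I hI f η hη hchain hbound ε hε
    rwa [show f 0 = g from iteratedDerivWithin_zero] at h
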